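/- Let G be a P_5-free graph containing an induced 5-cycle C = v_1 v_2 v_3 v_4 v_5 v_1. Then every vertex u of G has neighbourhood in C equal to one of: the empty set; {v_{i-1}, v_{i+1}} for some i; {v_{i-1}, v_i, v_{i+1}} for some i; {v_{i-2}, v_i, v_{i+2}} for some i; {v_{i-1}, v_i, v_{i+1}, v_{i+2}} for some i; or all of V(C), where indices are taken modulo 5. -/

import Mathlib

open SimpleGraph

/-- The paw: a triangle 0,1,2 plus vertex 3 adjacent only to 0. -/
def pawGraph : SimpleGraph (Fin 4) :=
  SimpleGraph.fromEdgeSet {s(0,1), s(0,2), s(1,2), s(0,3)}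

/-- The HVN: a K₄ on 0,1,2,3 plus vertex 4 adjacent to exactly 0 and 1. -/
def hvnGraph : SimpleGraph (Fin 5) :=
  SimpleGraph.fromEdgeSet {s(0,1), s(0,2), s(0,3), s(1,2), s(1,3), s(2,3), s(4,0), s(4,1)}

/-- The T-5-wheel: 5-cycle 0-1-2-3-4-0 plus vertex 5 adjacent to the three consecutive
vertices 4, 0, 1. -/
def t5WheelGraph : SimpleGraph (Fin 6) :=
  SimpleGraph.fromEdgeSet {s(0,1), s(1,2), s(2,3), s(3,4), s(4,0), s(5,4), s(5,0), s(5,1)}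

/-- The Y-5-wheel: 5-cycle 0-1-2-3-4-0 plus vertex 5 adjacent to 0, 1, 3
(three non-consecutive vertices). -/
def y5WheelGraph : SimpleGraph (Fin 6) :=
  SimpleGraph.fromEdgeSet {s(0,1), s(1,2), s(2,3), s(3,4), s(4,0), s(5,0), s(5,1), s(5,3)}

/-- `G` contains an induced copy of `H`: an injection preserving and reflecting adjacency. -/
def ContainsInduced {V W : Type*} (G : SimpleGraph V) (H : SimpleGraph W) : Prop :=
  ∃ f : W ↪ V, ∀ a b : W, H.Adj a b ↔ G.Adj (f a) (f b)

/-- `G` is `H`-free: no induced copy of `H`. -/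
def InducedFree {V W : Type*} (G : SimpleGraph V) (H : SimpleGraph W) : Prop :=
  ¬ ContainsInduced G H

/-- `v` lists the vertices of an induced (chordless) 5-cycle of `G`, in order. -/
def IsInducedC5 {V : Type*} (G : SimpleGraph V) (v : ZMod 5 → V) : Prop :=
  Function.Injective v ∧ ∀ i j : ZMod 5, G.Adj (v i) (v j) ↔ (j = i + 1 ∨ j = i - 1)

/-- The neighbourhood of `u` on the 5-cycle with vertices `v i`. -/
def cycNbhd {V : Type*} (G : SimpleGraph V) (v : ZMod 5 → V) (u : V) : Set V :=
  {w | (∃ i, w = v i) ∧ G.Adj u w}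

lemma classify : ∀ s : Finset (ZMod 5),
    s = ∅ ∨ (∃ i, s = {i - 1, i + 1}) ∨ (∃ i, s = {i - 1, i, i + 1}) ∨
    (∃ i, s = {i - 2, i, i + 2}) ∨ (∃ i, s = {i - 1, i, i + 1, i + 2}) ∨
    s = Finset.univ ∨ (∃ i, s = {i}) ∨ (∃ i, s = {i, i + 1}) := by decide

lemma p5_aux {V : Type*} {G : SimpleGraph V} (hP5 : InducedFree G (pathGraph 5))
    {u a b c d : V} (h1 : G.Adj u a) (n1 : ¬G.Adj u b) (n2 : ¬G.Adj u c) (n3 : ¬G.Adj u d)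
    (e1 : G.Adj a b) (e2 : G.Adj b c) (e3 : G.Adj c d)
    (m1 : ¬G.Adj a c) (m2 : ¬G.Adj a d) (m3 : ¬G.Adj b d) : False := by
  apply hP5
  have hua : u ≠ a := h1.ne
  have hub : u ≠ b := fun h => n2 (h ▸ e2)
  have huc : u ≠ c := fun h => n1 (h ▸ e2.symm)
  have hud : u ≠ d := fun h => n2 (h ▸ e3.symm)
  have hab : a ≠ b := e1.ne
  have hbc : b ≠ c := e2.ne
  have hcd : c ≠ d := e3.ne
  have hac : a ≠ c := fun h => m2 (h ▸ e3)
  have had : a ≠ d := fun h => m3 (h ▸ e1.symm)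
  have hbd : b ≠ d := fun h => m2 (h ▸ e1)
  refine ⟨⟨![u, a, b, c, d], ?_⟩, ?_⟩
  · intro x y hxy
    fin_cases x <;> fin_cases y <;>
      simp_all [Matrix.cons_val_zero, Matrix.cons_val_one]
  · intro x y
    have k1 := e1.symm; have k2 := e2.symm; have k3 := e3.symm
    have k4 := h1.symm
    have m1' : ¬G.Adj c a := fun h => m1 h.symm
    have m2' : ¬G.Adj d a := fun h => m2 h.symm
    have m3' : ¬G.Adj d b := fun h => m3 h.symm
    have n1' : ¬G.Adj b u := fun h => n1 h.symm
    have n2' : ¬G.Adj c u := fun h => n2 h.symm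
    have n3' : ¬G.Adj d u := fun h => n3 h.symm
    fin_cases x <;> fin_cases y <;>
      simp_all [pathGraph_adj, SimpleGraph.irrefl] <;> assumption

lemma cyc_adj {V : Type*} {G : SimpleGraph V} {v : ZMod 5 → V} (hC : IsInducedC5 G v)
    (i a b : ZMod 5) : G.Adj (v (i + a)) (v (i + b)) ↔ (b = a + 1 ∨ b = a - 1) := by
  rw [hC.2]
  constructor
  · rintro (h | h)
    · left
      have h2 : i + b = i + (a + 1) := by rw [h]; ring
      exact add_left_cancel h2
    · right
      have h2 : i + b = i + (a - 1) := by rw [h]; ring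
      exact add_left_cancel h2
  · rintro (rfl | rfl)
    · left; ring
    · right; ring

/-- In a P₅-free graph, the neighbourhood of any vertex on an induced 5-cycle is one of
the listed patterns. -/
theorem p5_free_c5_neighbourhoods {V : Type*} (G : SimpleGraph V)
    (hP5 : InducedFree G (pathGraph 5)) (v : ZMod 5 → V) (hC : IsInducedC5 G v) :
    ∀ u : V,
      cycNbhd G v u = (∅ : Set V) ∨
      (∃ i, cycNbhd G v u = {v (i - 1), v (i + 1)}) ∨
      (∃ i, cycNbhd G v u = {v (i - 1), v i, v (i + 1)}) ∨
      (∃ i, cycNbhd G v u = {v (i - 2), v i, v (i + 2)}) ∨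
      (∃ i, cycNbhd G v u = {v (i - 1), v i, v (i + 1), v (i + 2)}) ∨
      cycNbhd G v u = Set.range v := by
  classical
  intro u
  set S : Finset (ZMod 5) := Finset.univ.filter (fun i => G.Adj u (v i)) with hSdef
  have hmem : ∀ i, G.Adj u (v i) ↔ i ∈ S := by intro i; simp [hSdef]
  have himg : cycNbhd G v u = v '' ↑S := by
    ext w
    simp only [cycNbhd, Set.mem_setOf_eq, Set.mem_image, Finset.mem_coe]
    constructor
    · rintro ⟨⟨i, rfl⟩, h⟩; exact ⟨i, (hmem i).1 h, rfl⟩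
    · rintro ⟨i, h, rfl⟩; exact ⟨⟨i, rfl⟩, (hmem i).2 h⟩
  rcases classify S with h | ⟨i, h⟩ | ⟨i, h⟩ | ⟨i, h⟩ | ⟨i, h⟩ | h | ⟨i, h⟩ | ⟨i, h⟩
  · left; rw [himg, h]; simp
  · right; left
    exact ⟨i, by rw [himg, h]; simp [Set.image_insert_eq]⟩
  · right; right; left
    exact ⟨i, by rw [himg, h]; simp [Set.image_insert_eq]⟩
  · right; right; right; left
    exact ⟨i, by rw [himg, h]; simp [Set.image_insert_eq]⟩
  · right; right; right; right; left
    exact ⟨i, by rw [himg, h]; simp [Set.image_insert_eq]⟩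
  · right; right; right; right; right
    rw [himg, h]; simp
  · -- S = {i} : contradiction via P5  u, v i, v(i+1), v(i+2), v(i+3)
    exfalso
    have pos : G.Adj u (v (i + 0)) := by
      rw [hmem, h]
      exact (by decide : ∀ j : ZMod 5, j + 0 ∈ ({j} : Finset (ZMod 5))) i
    have neg : ∀ c : ZMod 5, c ≠ 0 → ¬G.Adj u (v (i + c)) := by
      intro c hc hadj
      rw [hmem, h, Finset.mem_singleton] at hadj
      exact hc (by have h2 : i + c = i + 0 := by simpa using hadj
                   exact add_left_cancel h2)
    exact p5_aux hP5 pos (neg 1 (by decide)) (neg 2 (by decide)) (neg 3 (by decide))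
      ((cyc_adj hC i 0 1).2 (by decide)) ((cyc_adj hC i 1 2).2 (by decide))
      ((cyc_adj hC i 2 3).2 (by decide))
      (fun hh => absurd ((cyc_adj hC i 0 2).1 hh) (by decide))
      (fun hh => absurd ((cyc_adj hC i 0 3).1 hh) (by decide))
      (fun hh => absurd ((cyc_adj hC i 1 3).1 hh) (by decide))
  · -- S = {i, i+1} : contradiction via P5  u, v(i+1), v(i+2), v(i+3), v(i+4)
    exfalso
    have pos : G.Adj u (v (i + 1)) := by
      rw [hmem, h]
      exact (by decide : ∀ j : ZMod 5, j + 1 ∈ ({j, j + 1} : Finset (ZMod 5))) i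
    have neg : ∀ c : ZMod 5, c ≠ 0 → c ≠ 1 → ¬G.Adj u (v (i + c)) := by
      intro c hc0 hc1 hadj
      rw [hmem, h, Finset.mem_insert, Finset.mem_singleton] at hadj
      rcases hadj with h2 | h2
      · exact hc0 (by have h3 : i + c = i + 0 := by simpa using h2
                      exact add_left_cancel h3)
      · exact hc1 (add_left_cancel h2)
    exact p5_aux hP5 pos (neg 2 (by decide) (by decide)) (neg 3 (by decide) (by decide))
      (neg 4 (by decide) (by decide))
      ((cyc_adj hC i 1 2).2 (by decide)) ((cyc_adj hC i 2 3).2 (by decide))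
      ((cyc_adj hC i 3 4).2 (by decide))
      (fun hh => absurd ((cyc_adj hC i 1 3).1 hh) (by decide))
      (fun hh => absurd ((cyc_adj hC i 1 4).1 hh) (by decide))
      (fun hh => absurd ((cyc_adj hC i 2 4).1 hh) (by decide))
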